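/- arXiv:1109.3557 — 2 statements merged into one kernel-verified Lean document; each statement's English description precedes it below -/
import Mathlib

section
/- Let (Vⁱ, Aⁱ) be a quasicomplex of Hilbert spaces whose Laplacians Δⁱ = Aⁱ⁻¹(Aⁱ⁻¹)* + (Aⁱ)*Aⁱ are Fredholm, and let Gⁱ be parametrices of Δⁱ with Gⁱ⁺¹ Aⁱ − Aⁱ Gⁱ compact. Then the operators Pⁱ = Gⁱ⁻¹ (Aⁱ⁻¹)* form a parametrix of the quasicomplex: Pⁱ⁺¹ Aⁱ + Aⁱ⁻¹ Pⁱ − Id_{Vⁱ} is compact for all i. -/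
set_option synthInstance.maxHeartbeats 1000000
set_option maxHeartbeats 1000000

/-- Let `(Vⁱ, Aⁱ)` be a quasicomplex of Hilbert spaces
(`Aⁱ⁺¹ Aⁱ` compact) whose Laplacians `Δⁱ⁺¹ = Aⁱ (Aⁱ)* + (Aⁱ⁺¹)* Aⁱ⁺¹` are
Fredholm, and let `Gⁱ` be parametrices of the Laplacians (`G Δ − Id` and
`Δ G − Id` compact) satisfying `Gⁱ⁺¹ Aⁱ − Aⁱ Gⁱ` compact. Then the operators
`Pⁱ = Gⁱ⁻¹ (Aⁱ⁻¹)*` form a parametrix of the quasicomplex: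
`Pⁱ⁺¹ Aⁱ + Aⁱ⁻¹ Pⁱ − Id` is compact at every step. -/
theorem stmt_13 {V : ℤ → Type*} [∀ i, NormedAddCommGroup (V i)]
    [∀ i, InnerProductSpace ℂ (V i)] [∀ i, CompleteSpace (V i)]
    (A : ∀ i, V i →L[ℂ] V (i+1)) (G : ∀ i, V i →L[ℂ] V i)
    (hquasi : ∀ i, IsCompactOperator ⇑((A (i+1)).comp (A i)))
    (hFred : ∀ i,
      FiniteDimensional ℂ ↥(LinearMap.ker ((((A i).comp (ContinuousLinearMap.adjoint (A i))
        + (ContinuousLinearMap.adjoint (A (i+1))).comp (A (i+1)) : V (i+1) →L[ℂ] V (i+1)) :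
          V (i+1) →ₗ[ℂ] V (i+1)))) ∧
      FiniteDimensional ℂ (V (i+1) ⧸
        LinearMap.range ((((A i).comp (ContinuousLinearMap.adjoint (A i))
          + (ContinuousLinearMap.adjoint (A (i+1))).comp (A (i+1)) : V (i+1) →L[ℂ] V (i+1)) :
            V (i+1) →ₗ[ℂ] V (i+1)))))
    (hGl : ∀ i, IsCompactOperator ⇑((G (i+1)).comp
        ((A i).comp (ContinuousLinearMap.adjoint (A i))
          + (ContinuousLinearMap.adjoint (A (i+1))).comp (A (i+1)))
        - ContinuousLinearMap.id ℂ (V (i+1))))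
    (hGr : ∀ i, IsCompactOperator ⇑(((A i).comp (ContinuousLinearMap.adjoint (A i))
          + (ContinuousLinearMap.adjoint (A (i+1))).comp (A (i+1))).comp (G (i+1))
        - ContinuousLinearMap.id ℂ (V (i+1))))
    (hGcomm : ∀ i, IsCompactOperator ⇑((G (i+1)).comp (A i) - (A i).comp (G i))) :
    ∀ i, IsCompactOperator ⇑(((G (i+1)).comp
          (ContinuousLinearMap.adjoint (A (i+1)))).comp (A (i+1))
        + (A i).comp ((G i).comp (ContinuousLinearMap.adjoint (A i)))
        - ContinuousLinearMap.id ℂ (V (i+1))) := by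
  intro i
  have h1 := hGl i
  have h2 : IsCompactOperator
      ⇑(((G (i+1)).comp (A i) - (A i).comp (G i)).comp (ContinuousLinearMap.adjoint (A i))) := by
    exact (hGcomm i).comp_clm _
  have key : ((G (i+1)).comp (ContinuousLinearMap.adjoint (A (i+1)))).comp (A (i+1))
        + (A i).comp ((G i).comp (ContinuousLinearMap.adjoint (A i)))
        - ContinuousLinearMap.id ℂ (V (i+1))
      = ((G (i+1)).comp
          ((A i).comp (ContinuousLinearMap.adjoint (A i))
            + (ContinuousLinearMap.adjoint (A (i+1))).comp (A (i+1)))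
          - ContinuousLinearMap.id ℂ (V (i+1)))
        - ((G (i+1)).comp (A i) - (A i).comp (G i)).comp (ContinuousLinearMap.adjoint (A i)) := by
    ext x
    simp [ContinuousLinearMap.comp_apply]
    abel
  rw [key]
  exact h1.sub h2
end

section
/- Let (Vⁱ, Dⁱ) be a Fredholm complex of bounded operators between Hilbert spaces, and define the rolled-up operator T : ⊕ᵢ V^{2i} → ⊕ᵢ V^{2i+1} by T = ⊕ᵢ (D^{2i} + (D^{2i+1})*) restricted appropriately (block matrix with D^{2i} and (D^{2i+1})* entries). Then T is a Fredholm operator and ind T = χ(V) = ∑ᵢ (-1)ⁱ dim Hⁱ(V). -/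
set_option synthInstance.maxHeartbeats 1000000
set_option maxHeartbeats 1000000

open ContinuousLinearMap Submodule

local notation "⟪" x ", " y "⟫" => @inner ℂ _ _ x y

section Aux

variable {E F G : Type*}

/-- kernel of adjoint is orthogonal complement of range -/
theorem aux_ker_adjoint [NormedAddCommGroup E] [InnerProductSpace ℂ E] [CompleteSpace E]
    [NormedAddCommGroup F] [InnerProductSpace ℂ F] [CompleteSpace F] (f : E →L[ℂ] F) :
    LinearMap.ker (adjoint f).toLinearMap = (LinearMap.range f.toLinearMap)ᗮ := by
  ext x
  simp only [LinearMap.mem_ker, Submodule.mem_orthogonal, ContinuousLinearMap.coe_coe]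
  constructor
  · rintro hx u ⟨e, rfl⟩
    have : ⟪x, f e⟫ = 0 := by rw [← adjoint_inner_left, hx]; simp
    simpa [inner_eq_zero_symm] using this
  · intro h
    apply ext_inner_right ℂ
    intro e
    rw [adjoint_inner_left]
    have := h (f e) ⟨e, rfl⟩
    simpa [inner_eq_zero_symm] using this

/-- a continuous linear map with finite-codimensional range into a Banach space has closed
range. -/
theorem aux_closedRange_of_finiteCodim [NormedAddCommGroup E] [NormedSpace ℂ E]
    [CompleteSpace E] [NormedAddCommGroup F] [NormedSpace ℂ F] [CompleteSpace F]
    (g : E →L[ℂ] F) (hfd : FiniteDimensional ℂ (F ⧸ LinearMap.range g.toLinearMap)) :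
    IsClosed ((LinearMap.range g.toLinearMap : Submodule ℂ F) : Set F) := by
  haveI : IsClosed ((LinearMap.ker g.toLinearMap : Submodule ℂ E) : Set E) := isClosed_ker g
  set K : Submodule ℂ E := LinearMap.ker g.toLinearMap with hK
  have hcont : Continuous (K.liftQ (g : E →ₗ[ℂ] F) le_rfl) := by
    rw [← (Submodule.isOpenQuotientMap_mkQ K).continuous_comp_iff]
    exact g.continuous
  set gbar : (E ⧸ K) →L[ℂ] F := ⟨K.liftQ (g : E →ₗ[ℂ] F) le_rfl, hcont⟩ with hgbar
  have hrange : LinearMap.range gbar.toLinearMap = LinearMap.range g.toLinearMap := by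
    have : LinearMap.range (gbar : (E ⧸ K) →ₗ[ℂ] F) = LinearMap.range (g : E →ₗ[ℂ] F) :=
      Submodule.range_liftQ _ _ _
    exact this
  have hker : LinearMap.ker gbar.toLinearMap = ⊥ := Submodule.ker_liftQ_eq_bot _ _ _ le_rfl
  obtain ⟨Gc, hGc⟩ := Submodule.exists_isCompl (LinearMap.range gbar.toLinearMap)
  haveI : FiniteDimensional ℂ (F ⧸ LinearMap.range gbar.toLinearMap) := by rwa [hrange]
  haveI : FiniteDimensional ℂ Gc :=
    ((LinearMap.range gbar.toLinearMap).quotientEquivOfIsCompl Gc hGc).finiteDimensional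
  have hGclosed : IsClosed (Gc : Set F) := Gc.closed_of_finiteDimensional
  have := ContinuousLinearMap.closed_complemented_range_of_isCompl_of_ker_eq_bot
    gbar Gc hGc hGclosed hker
  rwa [hrange] at this

end Aux

section Aux2
variable {E F G : Type*}


theorem aux_closedRange_in_submodule [NormedAddCommGroup E] [NormedSpace ℂ E]
    [CompleteSpace E] [NormedAddCommGroup F] [NormedSpace ℂ F] [CompleteSpace F]
    (f : E →L[ℂ] F) (N : Submodule ℂ F) (hN : IsClosed (N : Set F))
    (hle : LinearMap.range f.toLinearMap ≤ N)
    (hfd : FiniteDimensional ℂ (N ⧸ Submodule.comap N.subtype (LinearMap.range f.toLinearMap))) :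
    IsClosed ((LinearMap.range f.toLinearMap : Submodule ℂ F) : Set F) := by
  haveI : CompleteSpace N := hN.completeSpace_coe
  set g : E →L[ℂ] N := f.codRestrict N (fun x => hle ⟨x, rfl⟩) with hg
  have hrg : LinearMap.range g.toLinearMap = Submodule.comap N.subtype (LinearMap.range f.toLinearMap) := by
    ext x
    simp only [LinearMap.mem_range, Submodule.mem_comap, Submodule.coe_subtype]
    constructor
    · rintro ⟨e, rfl⟩; exact ⟨e, rfl⟩
    · rintro ⟨e, he⟩; exact ⟨e, Subtype.ext he⟩
  have hclosed : IsClosed ((LinearMap.range g.toLinearMap : Submodule ℂ N) : Set N) := by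
    apply aux_closedRange_of_finiteCodim
    · rwa [hrg]
  have himg : (Subtype.val '' ((LinearMap.range g.toLinearMap : Submodule ℂ N) : Set N)) =
      ((LinearMap.range f.toLinearMap : Submodule ℂ F) : Set F) := by
    ext x
    simp only [Set.mem_image, SetLike.mem_coe]
    constructor
    · rintro ⟨y, ⟨e, rfl⟩, rfl⟩; exact ⟨e, rfl⟩
    · rintro ⟨e, rfl⟩; exact ⟨g e, ⟨e, rfl⟩, rfl⟩
  rw [← himg]
  exact (hN.isClosedEmbedding_subtypeVal).isClosedMap _ hclosed

/-- closed range theorem, easy Hilbert version -/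
theorem aux_range_adjoint [NormedAddCommGroup E] [InnerProductSpace ℂ E] [CompleteSpace E]
    [NormedAddCommGroup F] [InnerProductSpace ℂ F] [CompleteSpace F]
    (f : E →L[ℂ] F) (hc : IsClosed ((LinearMap.range f.toLinearMap : Submodule ℂ F) : Set F)) :
    LinearMap.range (adjoint f).toLinearMap = (LinearMap.ker f.toLinearMap)ᗮ := by
  haveI : CompleteSpace (LinearMap.range f.toLinearMap) := hc.completeSpace_coe
  haveI : CompleteSpace ((LinearMap.ker f.toLinearMap)ᗮ : Submodule ℂ E) :=
    (Submodule.isClosed_orthogonal _).completeSpace_coe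
  set φ0 : ((LinearMap.ker f.toLinearMap)ᗮ : Submodule ℂ E) →L[ℂ] (LinearMap.range f.toLinearMap : Submodule ℂ F) :=
    ContinuousLinearMap.codRestrict (f.comp (Submodule.subtypeL _)) _
      (fun x => ⟨x, rfl⟩) with hφ0
  have hker0 : LinearMap.ker φ0.toLinearMap = ⊥ := by
    rw [eq_bot_iff]
    rintro ⟨x, hx⟩ hmem
    have hfx : f x = 0 := by
      have := congrArg Subtype.val hmem
      exact this
    have hxker : x ∈ LinearMap.ker f.toLinearMap := hfx
    have : x = 0 := by
      have := (Submodule.mem_orthogonal _ x).mp hx x hxker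
      simpa [inner_self_eq_zero] using this
    rw [Submodule.mem_bot]
    exact Subtype.ext this
  have hsurj0 : LinearMap.range φ0.toLinearMap = ⊤ := by
    rw [eq_top_iff]
    rintro ⟨y, e, rfl⟩ -
    refine ⟨⟨e - orthogonalProjection (LinearMap.ker f.toLinearMap) e,
      Submodule.sub_starProjection_mem_orthogonal e⟩, ?_⟩
    apply Subtype.ext
    have : f ((orthogonalProjection (LinearMap.ker f.toLinearMap) e : E)) = 0 :=
      (orthogonalProjection (LinearMap.ker f.toLinearMap) e).2
    show f (e - _) = f e
    rw [map_sub, this, sub_zero]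
  set φ : ((LinearMap.ker f.toLinearMap)ᗮ : Submodule ℂ E) ≃L[ℂ] (LinearMap.range f.toLinearMap : Submodule ℂ F) :=
    ContinuousLinearEquiv.ofBijective φ0 hker0 hsurj0 with hφ
  set g : F →L[ℂ] E :=
    (Submodule.subtypeL _).comp
      (((φ.symm : (LinearMap.range f.toLinearMap : Submodule ℂ F) ≃L[ℂ] ((LinearMap.ker f.toLinearMap)ᗮ : Submodule ℂ E)) :
        (LinearMap.range f.toLinearMap : Submodule ℂ F) →L[ℂ] ((LinearMap.ker f.toLinearMap)ᗮ : Submodule ℂ E)).comp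
      (orthogonalProjection (LinearMap.range f.toLinearMap))) with hgdef
  apply le_antisymm
  · rintro x ⟨z, rfl⟩
    rw [Submodule.mem_orthogonal]
    intro u hu
    have : ⟪adjoint f z, u⟫ = 0 := by
      rw [adjoint_inner_left]
      have : f u = 0 := hu
      simp [this]
    simpa [inner_eq_zero_symm] using this
  · intro x hx
    refine ⟨adjoint g x, ?_⟩
    apply ext_inner_right ℂ
    intro e
    rw [ContinuousLinearMap.coe_coe, adjoint_inner_left, adjoint_inner_left]
    -- ⟪x, g (f e)⟫ = ⟪x, e⟫
    have hproj : orthogonalProjection (LinearMap.range f.toLinearMap) (f e) = ⟨f e, ⟨e, rfl⟩⟩ := by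
      exact orthogonalProjection_mem_subspace_eq_self (⟨f e, ⟨e, rfl⟩⟩ : LinearMap.range f.toLinearMap)
    have hsymm : φ.symm ⟨f e, ⟨e, rfl⟩⟩ = ⟨e - orthogonalProjection (LinearMap.ker f.toLinearMap) e,
        Submodule.sub_starProjection_mem_orthogonal e⟩ := by
      rw [ContinuousLinearEquiv.symm_apply_eq]
      symm
      apply Subtype.ext
      have : f ((orthogonalProjection (LinearMap.ker f.toLinearMap) e : E)) = 0 :=
        (orthogonalProjection (LinearMap.ker f.toLinearMap) e).2
      show f (e - _) = f e
      rw [map_sub, this, sub_zero]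
    have hginner : g (f e) = e - orthogonalProjection (LinearMap.ker f.toLinearMap) e := by
      simp only [hgdef, ContinuousLinearMap.coe_comp', Function.comp_apply, hproj]
      rw [ContinuousLinearEquiv.coe_coe, hsymm]
      rfl
    rw [hginner, inner_sub_right]
    have : ⟪x, (orthogonalProjection (LinearMap.ker f.toLinearMap) e : E)⟫ = 0 := by
      have := (Submodule.mem_orthogonal _ x).mp hx _ (orthogonalProjection (LinearMap.ker f.toLinearMap) e).2
      simpa [inner_eq_zero_symm] using this
    rw [this, sub_zero]

end Aux2
section Aux3
open ContinuousLinearMap Submodule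
variable {E F G : Type*}

/-- the sum of a closed subspace and a closed subspace of its orthogonal complement is closed -/
theorem aux_isClosed_sup [NormedAddCommGroup E] [InnerProductSpace ℂ E] [CompleteSpace E]
    (p q : Submodule ℂ E) (hp : IsClosed (p : Set E)) (hq : IsClosed (q : Set E))
    (hpq : q ≤ pᗮ) : IsClosed ((p ⊔ q : Submodule ℂ E) : Set E) := by
  haveI : CompleteSpace p := hp.completeSpace_coe
  apply IsSeqClosed.isClosed
  intro x l hx hl
  have key : ∀ n, (orthogonalProjection p (x n) : E) ∈ p ∧ x n - orthogonalProjection p (x n) ∈ q := by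
    intro n
    obtain ⟨y, hy, z, hz, hyz⟩ := Submodule.mem_sup.mp (hx n)
    have hproj : (orthogonalProjection p (x n) : E) = y := by
      rw [← hyz, map_add]
      have h1 : orthogonalProjection p y = ⟨y, hy⟩ :=
        orthogonalProjection_mem_subspace_eq_self (⟨y, hy⟩ : p)
      have h2 : orthogonalProjection p z = 0 :=
        Submodule.orthogonalProjectionOnto_apply_of_mem_orthogonal (hpq hz)
      rw [h1, h2]
      simp
    constructor
    · exact (orthogonalProjection p (x n)).2
    · rw [hproj, ← hyz]; simpa using hz
  have hcont : Filter.Tendsto (fun n => (orthogonalProjection p (x n) : E)) Filter.atTop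
      (nhds (orthogonalProjection p l : E)) := by
    exact ((continuous_subtype_val.comp (orthogonalProjection p).continuous).continuousAt).tendsto.comp hl
  have hy : (orthogonalProjection p l : E) ∈ p := (orthogonalProjection p l).2
  have hz : l - orthogonalProjection p l ∈ q := by
    have : Filter.Tendsto (fun n => x n - (orthogonalProjection p (x n) : E)) Filter.atTop
        (nhds (l - orthogonalProjection p l)) := hl.sub hcont
    exact hq.mem_of_tendsto this (Filter.Eventually.of_forall fun n => (key n).2)
  exact Submodule.mem_sup.mpr ⟨_, hy, _, hz, by abel⟩

/-- quotient by a closed subspace is equivalent to the orthogonal complement -/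
noncomputable def auxQuotEquiv [NormedAddCommGroup E] [InnerProductSpace ℂ E] [CompleteSpace E]
    (K : Submodule ℂ E) (hK : IsClosed (K : Set E)) : (E ⧸ K) ≃ₗ[ℂ] Kᗮ :=
  haveI : CompleteSpace K := hK.completeSpace_coe
  K.quotientEquivOfIsCompl Kᗮ K.isCompl_orthogonal_of_hasOrthogonalProjection

/-- Hodge: cohomology is isomorphic to the harmonic subspace -/
noncomputable def auxCohomEquiv [NormedAddCommGroup E] [InnerProductSpace ℂ E] [CompleteSpace E]
    [NormedAddCommGroup F] [InnerProductSpace ℂ F] [CompleteSpace F]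
    [NormedAddCommGroup G] [InnerProductSpace ℂ G] [CompleteSpace G]
    (f : E →L[ℂ] F) (g : F →L[ℂ] G) (hfg : ∀ x, g (f x) = 0)
    (hcl : IsClosed ((LinearMap.range f.toLinearMap : Submodule ℂ F) : Set F)) :
    ((LinearMap.ker g.toLinearMap : Submodule ℂ F) ⧸
        Submodule.comap (LinearMap.ker g.toLinearMap).subtype (LinearMap.range f.toLinearMap)) ≃ₗ[ℂ]
      (LinearMap.ker g.toLinearMap ⊓ LinearMap.ker (adjoint f).toLinearMap : Submodule ℂ F) := by
  haveI : CompleteSpace (LinearMap.ker g.toLinearMap : Submodule ℂ F) := (isClosed_ker g).completeSpace_coe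
  set N : Submodule ℂ F := LinearMap.ker g.toLinearMap with hN
  set K : Submodule ℂ N := Submodule.comap N.subtype (LinearMap.range f.toLinearMap) with hKdef
  have hKclosed : IsClosed (K : Set N) := hcl.preimage continuous_subtype_val
  have horth : Kᗮ = Submodule.comap N.subtype (N ⊓ LinearMap.ker (adjoint f).toLinearMap) := by
    ext x
    rw [Submodule.mem_orthogonal]
    simp only [Submodule.mem_comap, Submodule.mem_inf]
    constructor
    · intro h
      refine ⟨x.2, ?_⟩
      rw [aux_ker_adjoint f, Submodule.mem_orthogonal]
      rintro u ⟨e, rfl⟩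
      have hu : f e ∈ N := by
        rw [hN]; exact hfg e
      have := h ⟨f e, hu⟩ ⟨e, rfl⟩
      simpa [Submodule.coe_inner] using this
    · rintro ⟨-, hx⟩ u hu
      rw [aux_ker_adjoint f, Submodule.mem_orthogonal] at hx
      have := hx (u : F) hu
      simpa [Submodule.coe_inner] using this
  have e2 : (↥Kᗮ) ≃ₗ[ℂ] ↥(N ⊓ LinearMap.ker (adjoint f).toLinearMap) := by
    rw [horth]
    exact Submodule.comapSubtypeEquivOfLe (inf_le_left : N ⊓ LinearMap.ker (adjoint f).toLinearMap ≤ N)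
  exact (auxQuotEquiv K hKclosed).trans e2

end Aux3
theorem aux_alt_sum (c : ℕ → ℤ) (n : ℕ) :
    (∑ j ∈ Finset.range (n+1), c (2*j)) - (∑ j ∈ Finset.range (n+1), c (2*j+1))
      = c 0 + ∑ i ∈ Finset.range (2*n+1), (-1 : ℤ)^(i+1) * c (i+1) := by
  induction n with
  | zero => simp; ring
  | succ k ih =>
    have h1 : 2*(k+1)+1 = (2*k+1) + 1 + 1 := by ring
    rw [Finset.sum_range_succ (fun j => c (2*j)) (k+1),
      Finset.sum_range_succ (fun j => c (2*j+1)) (k+1), h1,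
      Finset.sum_range_succ _ (2*k+1+1), Finset.sum_range_succ _ (2*k+1)]
    have e1 : (-1:ℤ)^(2*k+1+1) = 1 := Even.neg_one_pow ⟨k+1, by ring⟩
    have e2 : (-1:ℤ)^(2*k+1+1+1) = -1 := Odd.neg_one_pow ⟨k+1, by ring⟩
    have h2 : 2*(k+1) = 2*k+1+1 := by ring
    have h3 : 2*(k+1)+1 = 2*k+1+1+1 := by ring
    rw [e1, e2, h2]
    linarith [ih]
theorem aux_PiLp_complete {n : ℕ} (W : Fin n → Type*) [∀ i, NormedAddCommGroup (W i)]
    [∀ i, CompleteSpace (W i)] : CompleteSpace (PiLp 2 W) :=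
  inferInstance

/-- Let `(Vⁱ, Dⁱ)` be a Fredholm complex of bounded operators between
Hilbert spaces, supported in degrees `0, …, 2m+1`. Let
`T : ⊕ⱼ V^{2j} → ⊕ⱼ V^{2j+1}` be the rolled-up operator, given in coordinates by
`(T u)ⱼ = D^{2j}(uⱼ) + (D^{2j+1})* (u_{j+1})` (with `u_{m+1} = 0`). Then `T` is
Fredholm and `ind T = χ(V) = ∑ᵢ (-1)ⁱ dim Hⁱ(V)`, where `H⁰ = ker D⁰` and
`Hⁱ⁺¹ = ker Dⁱ⁺¹ / im Dⁱ`. -/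
theorem stmt_19 {V : ℕ → Type*} [∀ i, NormedAddCommGroup (V i)]
    [∀ i, InnerProductSpace ℂ (V i)] [∀ i, CompleteSpace (V i)]
    (D : ∀ i, V i →L[ℂ] V (i+1)) (m : ℕ)
    (hD2 : ∀ i, (D (i+1)).comp (D i) = 0)
    (hsupp : ∀ i, 2*m+1 < i → Subsingleton (V i))
    (hfin0 : FiniteDimensional ℂ ↥(LinearMap.ker (D 0).toLinearMap))
    (hfin : ∀ i, FiniteDimensional ℂ (↥(LinearMap.ker (D (i+1)).toLinearMap) ⧸
        Submodule.comap (LinearMap.ker (D (i+1)).toLinearMap).subtype (LinearMap.range (D i).toLinearMap)))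
    (T : (PiLp 2 fun j : Fin (m+1) => V (2*(j : ℕ)))
        →L[ℂ] (PiLp 2 fun j : Fin (m+1) => V (2*(j : ℕ)+1)))
    (hT : ∀ (u : PiLp 2 fun j : Fin (m+1) => V (2*(j : ℕ))) (j : Fin (m+1)),
      T u j = D (2*(j : ℕ)) (u j) +
        ContinuousLinearMap.adjoint (D (2*(j : ℕ)+1))
          (if h : (j : ℕ) + 1 < m + 1 then u ⟨(j : ℕ)+1, h⟩ else 0)) :
    (FiniteDimensional ℂ ↥(LinearMap.ker T.toLinearMap) ∧
      FiniteDimensional ℂ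
        ((PiLp 2 fun j : Fin (m+1) => V (2*(j : ℕ)+1)) ⧸ LinearMap.range T.toLinearMap)) ∧
    (Module.finrank ℂ ↥(LinearMap.ker T.toLinearMap) : ℤ)
        - Module.finrank ℂ
            ((PiLp 2 fun j : Fin (m+1) => V (2*(j : ℕ)+1)) ⧸ LinearMap.range T.toLinearMap)
      = (Module.finrank ℂ ↥(LinearMap.ker (D 0 : V 0 →ₗ[ℂ] V (0+1))) : ℤ)
        + ∑ i ∈ Finset.range (2*m+1), (-1 : ℤ)^(i+1) *
            (Module.finrank ℂ (↥(LinearMap.ker (D (i+1) : V (i+1) →ₗ[ℂ] V (i+1+1))) ⧸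
              Submodule.comap (LinearMap.ker (D (i+1) : V (i+1) →ₗ[ℂ] V (i+1+1))).subtype
                (LinearMap.range (D i : V i →ₗ[ℂ] V (i+1)))) : ℤ) := by
  classical
  have hD2' : ∀ i (x : V i), D (i+1) (D i x) = 0 := fun i x => by
    have := congrArg (fun f : V i →L[ℂ] V (i+1+1) => f x) (hD2 i)
    simpa using this
  have hrangele : ∀ i, LinearMap.range (D i).toLinearMap ≤ LinearMap.ker (D (i+1)).toLinearMap := by
    rintro i x ⟨e, rfl⟩
    exact hD2' i e
  have hclosedRange : ∀ i,
      IsClosed ((LinearMap.range (D i).toLinearMap : Submodule ℂ (V (i+1))) : Set (V (i+1))) :=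
    fun i => aux_closedRange_in_submodule (D i) (LinearMap.ker (D (i+1)).toLinearMap)
      (ContinuousLinearMap.isClosed_ker _) (hrangele i) (hfin i)
  have hadjrange : ∀ i, LinearMap.range (ContinuousLinearMap.adjoint (D i)).toLinearMap
      = (LinearMap.ker (D i).toLinearMap)ᗮ :=
    fun i => aux_range_adjoint (D i) (hclosedRange i)
  have hadjclosed : ∀ i, IsClosed
      ((LinearMap.range (ContinuousLinearMap.adjoint (D i)).toLinearMap : Submodule ℂ (V i)) : Set (V i)) := by
    intro i; rw [hadjrange i]; exact Submodule.isClosed_orthogonal _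
  haveI instKerC : ∀ n : ℕ, CompleteSpace (LinearMap.ker (D n).toLinearMap) :=
    fun n => (ContinuousLinearMap.isClosed_ker _).completeSpace_coe
  haveI instRangeC : ∀ n : ℕ, CompleteSpace (LinearMap.range (D n).toLinearMap : Submodule ℂ (V (n+1))) :=
    fun n => (hclosedRange n).completeSpace_coe
  -- dimension counting function
  let c : ℕ → ℕ := fun i =>
    match i with
    | 0 => Module.finrank ℂ ↥(LinearMap.ker (D 0).toLinearMap)
    | Nat.succ i => Module.finrank ℂ (↥(LinearMap.ker (D (i+1)).toLinearMap) ⧸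
        Submodule.comap (LinearMap.ker (D (i+1)).toLinearMap).subtype (LinearMap.range (D i).toLinearMap))
  ------------------------------------------------------------------
  -- EVEN PART : kernel of T
  ------------------------------------------------------------------
  let Ke : ∀ n : ℕ, Submodule ℂ (V (2*n)) := fun n =>
    match n with
    | 0 => ⊤
    | Nat.succ k => LinearMap.ker (ContinuousLinearMap.adjoint (D (2*k+1))).toLinearMap
  let G : ∀ j : Fin (m+1), Submodule ℂ (V (2*(j : ℕ))) := fun j =>
    LinearMap.ker (D (2*(j : ℕ))).toLinearMap ⊓ Ke (j : ℕ)
  have memG : ∀ u : (PiLp 2 fun j : Fin (m+1) => V (2*(j : ℕ))),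
      u ∈ LinearMap.ker T.toLinearMap ↔ ∀ j, u j ∈ G j := by
    intro u
    constructor
    · intro hu
      have hcomp : ∀ j : Fin (m+1), D (2*(j : ℕ)) (u j) = 0 ∧
          (ContinuousLinearMap.adjoint (D (2*(j : ℕ)+1))
            (if h : (j : ℕ) + 1 < m + 1 then u ⟨(j : ℕ)+1, h⟩ else 0) = 0) := by
        intro j
        have h0 : T u j = 0 := by
          have h' : T u = 0 := hu
          rw [h']; rfl
        rw [hT] at h0
        set w : V (2*(j : ℕ)+1+1) := (if h : (j : ℕ) + 1 < m + 1 then u ⟨(j : ℕ)+1, h⟩ else 0) with hw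
        have hA : D (2*(j : ℕ)+1) (ContinuousLinearMap.adjoint (D (2*(j : ℕ)+1)) w) = 0 := by
          have h1 : ContinuousLinearMap.adjoint (D (2*(j : ℕ)+1)) w = - D (2*(j : ℕ)) (u j) :=
            eq_neg_of_add_eq_zero_right h0
          rw [h1, map_neg, hD2' (2*(j : ℕ)) (u j), neg_zero]
        have hA0 : ContinuousLinearMap.adjoint (D (2*(j : ℕ)+1)) w = 0 := by
          rw [← inner_self_eq_zero (𝕜 := ℂ)]
          rw [ContinuousLinearMap.adjoint_inner_left]
          rw [hA, inner_zero_right]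
        refine ⟨?_, hA0⟩
        rw [hA0, add_zero] at h0
        exact h0
      intro j
      refine ⟨(hcomp j).1, ?_⟩
      obtain ⟨jv, hjv⟩ := j
      cases jv with
      | zero => trivial
      | succ k =>
        have h2 := (hcomp ⟨k, Nat.lt_of_succ_lt hjv⟩).2
        rw [dif_pos (show (((⟨k, Nat.lt_of_succ_lt hjv⟩ : Fin (m+1)) : ℕ)) + 1 < m + 1 from hjv)]
          at h2
        exact h2
    · intro hmem
      have hj : ∀ j, T u j = 0 := by
        intro j
        rw [hT]
        have h1 : D (2*(j : ℕ)) (u j) = 0 := (hmem j).1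
        have h2 : ContinuousLinearMap.adjoint (D (2*(j : ℕ)+1))
            (if h : (j : ℕ) + 1 < m + 1 then u ⟨(j : ℕ)+1, h⟩ else 0) = 0 := by
          by_cases h : (j : ℕ) + 1 < m + 1
          · rw [dif_pos h]
            exact (hmem ⟨(j : ℕ)+1, h⟩).2
          · rw [dif_neg h, map_zero]
        rw [h1, h2, add_zero]
      exact (show T u = 0 from PiLp.ext fun j => hj j)
  let equivKer : ↥(LinearMap.ker T.toLinearMap) ≃ₗ[ℂ] ((j : Fin (m+1)) → ↥(G j)) :=
    { toFun := fun u j => ⟨u.1 j, (memG u.1).mp u.2 j⟩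
      map_add' := fun u v => funext fun j => rfl
      map_smul' := fun a u => funext fun j => rfl
      invFun := fun v => ⟨WithLp.toLp 2 (fun j => (v j : V (2*(j : ℕ)))), (memG _).mpr fun j => (v j).2⟩
      left_inv := fun u => rfl
      right_inv := fun v => rfl }
  have hGfin : ∀ j : Fin (m+1), FiniteDimensional ℂ ↥(G j) ∧
      Module.finrank ℂ ↥(G j) = c (2*(j : ℕ)) := by
    rintro ⟨jv, hjv⟩
    cases jv with
    | zero =>
      have hG0 : G ⟨0, hjv⟩ = LinearMap.ker (D 0).toLinearMap := inf_top_eq _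
      rw [hG0]
      exact ⟨hfin0, rfl⟩
    | succ k =>
      have E := auxCohomEquiv (D (2*k+1)) (D (2*k+1+1)) (fun x => hD2' (2*k+1) x)
        (hclosedRange (2*k+1))
      haveI := hfin (2*k+1)
      exact ⟨E.finiteDimensional, (LinearEquiv.finrank_eq E).symm⟩
  haveI hGfd : ∀ j, FiniteDimensional ℂ ↥(G j) := fun j => (hGfin j).1
  haveI hkerfd : FiniteDimensional ℂ ↥(LinearMap.ker T.toLinearMap) := equivKer.symm.finiteDimensional
  have hkerrank : Module.finrank ℂ ↥(LinearMap.ker T.toLinearMap) = ∑ j : Fin (m+1), c (2*(j : ℕ)) := by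
    rw [equivKer.finrank_eq, Module.finrank_pi_fintype ℂ]
    exact Finset.sum_congr rfl fun j _ => (hGfin j).2
  ------------------------------------------------------------------
  -- ODD PART : cokernel of T
  ------------------------------------------------------------------
  let Ro : ∀ j : Fin (m+1), Submodule ℂ (V (2*(j : ℕ)+1)) := fun j =>
    LinearMap.range (D (2*(j : ℕ))).toLinearMap ⊔
      LinearMap.range (ContinuousLinearMap.adjoint (D (2*(j : ℕ)+1))).toLinearMap
  have hRoorthle : ∀ j : Fin (m+1),
      LinearMap.range (ContinuousLinearMap.adjoint (D (2*(j : ℕ)+1))).toLinearMap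
        ≤ (LinearMap.range (D (2*(j : ℕ))).toLinearMap)ᗮ := by
    rintro j x ⟨y, rfl⟩
    rw [Submodule.mem_orthogonal]
    rintro u ⟨e, rfl⟩
    rw [ContinuousLinearMap.coe_coe, ContinuousLinearMap.coe_coe, ContinuousLinearMap.adjoint_inner_right, hD2' (2*(j : ℕ)) e, inner_zero_left]
  have hRoclosed : ∀ j : Fin (m+1), IsClosed ((Ro j : Submodule ℂ _) : Set (V (2*(j : ℕ)+1))) :=
    fun j => aux_isClosed_sup _ _ (hclosedRange (2*(j : ℕ))) (hadjclosed (2*(j : ℕ)+1))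
      (hRoorthle j)
  have hRorth : ∀ j : Fin (m+1), (Ro j)ᗮ = LinearMap.ker (D (2*(j : ℕ)+1)).toLinearMap ⊓
      LinearMap.ker (ContinuousLinearMap.adjoint (D (2*(j : ℕ)))).toLinearMap := by
    intro j
    have h1 : (Ro j)ᗮ = (LinearMap.range (D (2*(j : ℕ))).toLinearMap)ᗮ ⊓
        (LinearMap.range (ContinuousLinearMap.adjoint (D (2*(j : ℕ)+1))).toLinearMap)ᗮ :=
      (Submodule.inf_orthogonal _ _).symm
    have h2 : (LinearMap.range (ContinuousLinearMap.adjoint (D (2*(j : ℕ)+1))).toLinearMap)ᗮ =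
        LinearMap.ker (D (2*(j : ℕ)+1)).toLinearMap := by
      rw [← aux_ker_adjoint (ContinuousLinearMap.adjoint (D (2*(j : ℕ)+1))),
        ContinuousLinearMap.adjoint_adjoint]
    rw [h1, h2, ← aux_ker_adjoint (D (2*(j : ℕ))), inf_comm]
  let PR : Submodule ℂ (PiLp 2 fun j : Fin (m+1) => V (2*(j : ℕ)+1)) :=
    { carrier := {v | ∀ j, v j ∈ Ro j}
      add_mem' := fun hx hy j => (Ro j).add_mem (hx j) (hy j)
      zero_mem' := fun j => (Ro j).zero_mem
      smul_mem' := fun a v hv j => (Ro j).smul_mem a (hv j) }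
  have hPRclosed : IsClosed (PR : Set (PiLp 2 fun j : Fin (m+1) => V (2*(j : ℕ)+1))) := by
    have hset : (PR : Set (PiLp 2 fun j : Fin (m+1) => V (2*(j : ℕ)+1))) =
        ⋂ j, (fun v : (PiLp 2 fun j : Fin (m+1) => V (2*(j : ℕ)+1)) => v j) ⁻¹'
          ((Ro j : Submodule ℂ _) : Set (V (2*(j : ℕ)+1))) := by
      ext v
      simp only [Set.mem_iInter, Set.mem_preimage, SetLike.mem_coe]
      rfl
    rw [hset]
    exact isClosed_iInter fun j => (hRoclosed j).preimage (PiLp.continuous_apply 2 _ j)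
  have hrangeT : LinearMap.range T.toLinearMap = PR := by
    apply le_antisymm
    · rintro v ⟨u, rfl⟩
      intro j
      rw [ContinuousLinearMap.coe_coe, hT]
      exact (Ro j).add_mem (Submodule.mem_sup_left ⟨u j, rfl⟩)
        (Submodule.mem_sup_right ⟨_, rfl⟩)
    · intro v hv
      have hv' : ∀ j : Fin (m+1), ∃ (a : V (2*(j : ℕ))) (b : V (2*(j : ℕ)+2)),
          D (2*(j : ℕ)) a + ContinuousLinearMap.adjoint (D (2*(j : ℕ)+1)) b = v j := by
        intro j
        obtain ⟨y, hy, z, hz, hyz⟩ := Submodule.mem_sup.mp (hv j)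
        obtain ⟨a, rfl⟩ := hy
        obtain ⟨b, rfl⟩ := hz
        exact ⟨a, b, hyz⟩
      choose a b hab using hv'
      have hα : ∀ j : Fin (m+1), ∃ α : V (2*(j : ℕ)),
          α ∈ (LinearMap.ker (D (2*(j : ℕ))).toLinearMap)ᗮ ∧
          D (2*(j : ℕ)) α = D (2*(j : ℕ)) (a j) := by
        intro j
        obtain ⟨y, hy, z, hz, hyz⟩ :=
          (LinearMap.ker (D (2*(j : ℕ))).toLinearMap).exists_add_mem_mem_orthogonal (a j)
        refine ⟨z, hz, ?_⟩
        rw [hyz, map_add, show D (2*(j : ℕ)) y = 0 from hy, zero_add]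
      choose α hαmem hαD using hα
      have hβ : ∀ (k : ℕ) (hk : k+1 < m+1), ∃ β : V (2*k+1+1),
          β ∈ LinearMap.range (D (2*k+1)).toLinearMap ∧
          ContinuousLinearMap.adjoint (D (2*k+1)) β =
            ContinuousLinearMap.adjoint (D (2*k+1)) (b ⟨k, Nat.lt_of_succ_lt hk⟩) := by
        intro k hk
        obtain ⟨y, hy, z, hz, hyz⟩ :=
          (LinearMap.range (D (2*k+1)).toLinearMap).exists_add_mem_mem_orthogonal
            (b ⟨k, Nat.lt_of_succ_lt hk⟩)
        refine ⟨y, hy, ?_⟩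
        have hz0 : ContinuousLinearMap.adjoint (D (2*k+1)) z = 0 := by
          have hz' : z ∈ LinearMap.ker (ContinuousLinearMap.adjoint (D (2*k+1))).toLinearMap := by
            rw [aux_ker_adjoint]; exact hz
          exact hz'
        rw [hyz, map_add, hz0, add_zero]
      choose β hβmem hβeq using hβ
      let γ : ∀ j : Fin (m+1), V (2*(j : ℕ)) := fun j =>
        match j with
        | ⟨0, _⟩ => 0
        | ⟨Nat.succ k, h⟩ => β k h
      refine ⟨WithLp.toLp 2 (fun j => α j + γ j : ∀ j : Fin (m+1), V (2*(j : ℕ))), ?_⟩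
      have hγD : ∀ j : Fin (m+1), D (2*(j : ℕ)) (γ j) = 0 := by
        rintro ⟨jv, hjv⟩
        cases jv with
        | zero => exact map_zero _
        | succ k =>
          obtain ⟨e, he⟩ := hβmem k hjv
          show D (2*(k+1)) (β k hjv) = 0
          rw [← he]
          exact hD2' (2*k+1) e
      have hαadj : ∀ (j : Fin (m+1)) (h : (j : ℕ)+1 < m+1),
          ContinuousLinearMap.adjoint (D (2*(j : ℕ)+1)) (α ⟨(j : ℕ)+1, h⟩) = 0 := by
        intro j h
        have hmem2 : α ⟨(j : ℕ)+1, h⟩ ∈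
            LinearMap.ker (ContinuousLinearMap.adjoint (D (2*(j : ℕ)+1))).toLinearMap := by
          rw [aux_ker_adjoint]
          exact Submodule.orthogonal_le (hrangele (2*(j : ℕ)+1)) (hαmem ⟨(j : ℕ)+1, h⟩)
        exact hmem2
      have hγadj : ∀ (j : Fin (m+1)) (h : (j : ℕ)+1 < m+1),
          ContinuousLinearMap.adjoint (D (2*(j : ℕ)+1)) (γ ⟨(j : ℕ)+1, h⟩) =
            ContinuousLinearMap.adjoint (D (2*(j : ℕ)+1)) (b j) := by
        intro j h
        exact hβeq (j : ℕ) h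
      have hfun : ∀ j, T (WithLp.toLp 2 (fun j => α j + γ j : ∀ j : Fin (m+1), V (2*(j : ℕ)))) j = v j := by
        intro j
        rw [hT]
        by_cases h : (j : ℕ) + 1 < m + 1
        · rw [dif_pos h]
          show D (2*(j : ℕ)) (α j + γ j) +
            ContinuousLinearMap.adjoint (D (2*(j : ℕ)+1)) (α ⟨(j : ℕ)+1, h⟩ + γ ⟨(j : ℕ)+1, h⟩)
              = v j
          rw [map_add, map_add, hγD j, hαD j, add_zero, hαadj j h, hγadj j h, zero_add]
          exact hab j
        · rw [dif_neg h]
          show D (2*(j : ℕ)) (α j + γ j) + ContinuousLinearMap.adjoint (D (2*(j : ℕ)+1)) 0 = v j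
          haveI hss : Subsingleton (V (2*(j : ℕ)+2)) := by
            have hjm : (j : ℕ) = m := by omega
            exact hsupp _ (by omega)
          have hb0 : b j = 0 := Subsingleton.elim _ _
          rw [map_zero, map_add, hγD j, hαD j, add_zero, add_zero, ← hab j, hb0, map_zero,
            add_zero]
      exact PiLp.ext hfun
  haveI hWOc : CompleteSpace (PiLp 2 fun j : Fin (m+1) => V (2*(j : ℕ)+1)) :=
    aux_PiLp_complete _
  have hPOmem : ∀ x : (PiLp 2 fun j : Fin (m+1) => V (2*(j : ℕ)+1)),
      x ∈ PRᗮ ↔ ∀ j, x j ∈ (Ro j)ᗮ := by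
    intro x
    rw [Submodule.mem_orthogonal]
    constructor
    · intro h j
      rw [Submodule.mem_orthogonal]
      intro y hy
      have hu : WithLp.toLp 2 (Pi.single j y : ∀ i : Fin (m+1), V (2*(i : ℕ)+1)) ∈ PR := by
        intro i
        show (Pi.single j y : ∀ i : Fin (m+1), V (2*(i : ℕ)+1)) i ∈ Ro i
        by_cases hij : i = j
        · subst hij; rw [Pi.single_eq_same]; exact hy
        · rw [Pi.single_eq_of_ne hij]; exact (Ro i).zero_mem
      have h2 := h _ hu
      simp only [PiLp.inner_apply, PiLp.toLp_apply] at h2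
      rw [Finset.sum_eq_single j (fun i _ hij => by
          rw [Pi.single_eq_of_ne hij, inner_zero_left])
        (fun hj => absurd (Finset.mem_univ j) hj)] at h2
      rwa [Pi.single_eq_same] at h2
    · intro h u hu
      rw [PiLp.inner_apply]
      exact Finset.sum_eq_zero fun i _ =>
        (Submodule.mem_orthogonal _ _).mp (h i) _ (hu i)
  let equivO : ↥(PRᗮ) ≃ₗ[ℂ] ((j : Fin (m+1)) → ↥((Ro j)ᗮ)) :=
    { toFun := fun u j => ⟨u.1 j, (hPOmem u.1).mp u.2 j⟩
      map_add' := fun u v => funext fun j => rfl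
      map_smul' := fun a u => funext fun j => rfl
      invFun := fun v => ⟨WithLp.toLp 2 (fun j => (v j : V (2*(j : ℕ)+1))), (hPOmem _).mpr fun j => (v j).2⟩
      left_inv := fun u => rfl
      right_inv := fun v => rfl }
  have hOfin : ∀ j : Fin (m+1), FiniteDimensional ℂ ↥((Ro j)ᗮ) ∧
      Module.finrank ℂ ↥((Ro j)ᗮ) = c (2*(j : ℕ)+1) := by
    intro j
    have E := auxCohomEquiv (D (2*(j : ℕ))) (D (2*(j : ℕ)+1)) (fun x => hD2' (2*(j : ℕ)) x)
      (hclosedRange (2*(j : ℕ)))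
    have E2 := E.trans (LinearEquiv.ofEq _ _ (hRorth j).symm)
    haveI := hfin (2*(j : ℕ))
    exact ⟨E2.finiteDimensional, (LinearEquiv.finrank_eq E2).symm⟩
  haveI hOfd : ∀ j, FiniteDimensional ℂ ↥((Ro j)ᗮ) := fun j => (hOfin j).1
  let cokEquiv : ((PiLp 2 fun j : Fin (m+1) => V (2*(j : ℕ)+1)) ⧸ LinearMap.range T.toLinearMap) ≃ₗ[ℂ]
      ((j : Fin (m+1)) → ↥((Ro j)ᗮ)) :=
    ((Submodule.quotEquivOfEq _ _ hrangeT).trans (auxQuotEquiv PR hPRclosed)).trans equivO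
  haveI hcokfd : FiniteDimensional ℂ
      ((PiLp 2 fun j : Fin (m+1) => V (2*(j : ℕ)+1)) ⧸ LinearMap.range T.toLinearMap) :=
    cokEquiv.symm.finiteDimensional
  have hcokrank : Module.finrank ℂ
      ((PiLp 2 fun j : Fin (m+1) => V (2*(j : ℕ)+1)) ⧸ LinearMap.range T.toLinearMap)
        = ∑ j : Fin (m+1), c (2*(j : ℕ)+1) := by
    rw [cokEquiv.finrank_eq, Module.finrank_pi_fintype ℂ]
    exact Finset.sum_congr rfl fun j _ => (hOfin j).2
  ------------------------------------------------------------------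
  -- conclusion
  ------------------------------------------------------------------
  refine ⟨⟨hkerfd, hcokfd⟩, ?_⟩
  rw [hkerrank, hcokrank]
  have harith := aux_alt_sum (fun i => (c i : ℤ)) m
  push_cast
  rw [Fin.sum_univ_eq_sum_range (fun j => (c (2*j) : ℤ)) (m+1),
    Fin.sum_univ_eq_sum_range (fun j => (c (2*j+1) : ℤ)) (m+1)]
  exact harith
end
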